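/- Let G be a connected graph on [n] that has the interval property with respect to its labeling, let H = in_lex(G), and let M = {x_{i_1}, y_{j_1}}, …, {x_{i_m}, y_{j_m}} be an induced matching of H with i_1 < ⋯ < i_m satisfying condition (∗) and with m = indmatch(H). Then the sequence i_1, i_2, …, i_m, j_m is an induced path of G of length m. -/

import Mathlib

open SimpleGraph

/-- `G` has the interval property with respect to its labeling: for every edge `{i,j}`
with `i < j`, every pair `{k,l}` with `i ≤ k < l ≤ j` is an edge of `G`. -/
def HasIntervalProperty {n : ℕ} (G : SimpleGraph (Fin n)) : Prop :=
  ∀ i j k l : Fin n, G.Adj i j → i < j → i ≤ k → k < l → l ≤ j → G.Adj k l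

/-- The bipartite graph `in_lex(G)` on `{x_1,…,x_n} ∪ {y_1,…,y_n}` (here `Sum.inl i = x_i`,
`Sum.inr j = y_j`) whose edges are the pairs `{x_i, y_j}` with `i < j` and `{i,j} ∈ E(G)`. -/
def inLex {n : ℕ} (G : SimpleGraph (Fin n)) : SimpleGraph (Fin n ⊕ Fin n) :=
  SimpleGraph.fromRel (fun u v =>
    ∃ i j : Fin n, i < j ∧ G.Adj i j ∧ u = Sum.inl i ∧ v = Sum.inr j)

/-- `M` is an induced matching of `H`: a set of edges of `H`, pairwise vertex-disjoint,
such that no edge of `H` joins two vertices lying in distinct edges of `M`. -/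
def IsInducedMatching {V : Type*} (H : SimpleGraph V) (M : Set (Sym2 V)) : Prop :=
  M ⊆ H.edgeSet ∧
  (∀ e ∈ M, ∀ f ∈ M, e ≠ f → ∀ v, v ∈ e → v ∉ f) ∧
  (∀ e ∈ M, ∀ f ∈ M, e ≠ f → ∀ u ∈ e, ∀ v ∈ f, ¬ H.Adj u v)

/-- An indexed family of `m` pairwise distinct edges forming an induced matching of `H`. -/
def IsInducedMatchingFamily {V : Type*} (H : SimpleGraph V) {m : ℕ} (f : Fin m → Sym2 V) : Prop :=
  Function.Injective f ∧ IsInducedMatching H (Set.range f)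

/-- `p` is an induced path of length `l` in `G`: `l+1` distinct vertices such that the edges
of `G` among them are exactly the consecutive pairs. -/
def IsInducedPath {V : Type*} (G : SimpleGraph V) (l : ℕ) (p : Fin (l + 1) → V) : Prop :=
  Function.Injective p ∧
  ∀ a b : Fin (l + 1), G.Adj (p a) (p b) ↔ ((a : ℕ) + 1 = b ∨ (b : ℕ) + 1 = a)

/-- `c` is an induced cycle of length `k` in `H`: `k` distinct vertices such that the edges
of `H` among them are exactly the consecutive pairs (cyclically). -/
def IsInducedCycle {V : Type*} (H : SimpleGraph V) (k : ℕ) (c : Fin k → V) : Prop :=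
  3 ≤ k ∧ Function.Injective c ∧
  ∀ a b : Fin k, H.Adj (c a) (c b) ↔ (((a : ℕ) + 1) % k = b ∨ ((b : ℕ) + 1) % k = a)

/-- Condition (∗) for an induced matching `{x_{i t}, y_{j t}}` of `in_lex(G)`: for every
index `a` and vertex `t < i a` with `{t, j a} ∈ E(G)`, replacing `x_{i a}` by `x_t`
does not yield an induced matching of `in_lex(G)`. -/
def CondStar {n m : ℕ} (G : SimpleGraph (Fin n)) (i j : Fin m → Fin n) : Prop :=
  ∀ a : Fin m, ∀ t : Fin n, t < i a → G.Adj t (j a) →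
    ¬ IsInducedMatchingFamily (inLex G)
        (fun u => if u = a then s(Sum.inl t, Sum.inr (j u))
                  else s(Sum.inl (i u), Sum.inr (j u)))

section Helpers
open Sum

lemma inLex_adj {n : ℕ} (G : SimpleGraph (Fin n)) (a b : Fin n) :
    (inLex G).Adj (inl a) (inr b) ↔ a < b ∧ G.Adj a b := by
  simp only [inLex, fromRel_adj]
  constructor
  · rintro ⟨-, (⟨i', j', h1, h2, h3, h4⟩ | ⟨i', j', h1, h2, h3, h4⟩)⟩
    · cases h3; cases h4; exact ⟨h1, h2⟩
    · exact absurd h3 (by simp)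
  · rintro ⟨h1, h2⟩
    exact ⟨by simp, Or.inl ⟨a, b, h1, h2, rfl, rfl⟩⟩

lemma inLex_not_adj_ll {n : ℕ} (G : SimpleGraph (Fin n)) (a b : Fin n) :
    ¬ (inLex G).Adj (inl a) (inl b) := by
  simp only [inLex, fromRel_adj]
  rintro ⟨-, (⟨i', j', h1, h2, h3, h4⟩ | ⟨i', j', h1, h2, h3, h4⟩)⟩ <;> simp_all

lemma inLex_not_adj_rr {n : ℕ} (G : SimpleGraph (Fin n)) (a b : Fin n) :
    ¬ (inLex G).Adj (inr a) (inr b) := by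
  simp only [inLex, fromRel_adj]
  rintro ⟨-, (⟨i', j', h1, h2, h3, h4⟩ | ⟨i', j', h1, h2, h3, h4⟩)⟩ <;> simp_all

lemma pair_eq_iff {n : ℕ} (p q p' q' : Fin n) :
    s((inl p : Fin n ⊕ Fin n), inr q) = s(inl p', inr q') ↔ p = p' ∧ q = q' := by
  rw [Sym2.eq_iff]; simp

lemma pair_disjoint {n : ℕ} (p q p' q' : Fin n) (hp : p ≠ p') (hq : q ≠ q') :
    ∀ v ∈ s((inl p : Fin n ⊕ Fin n), inr q), v ∉ s((inl p' : Fin n ⊕ Fin n), inr q') := by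
  intro v hv hv'
  rw [Sym2.mem_iff] at hv hv'
  rcases hv with rfl | rfl <;> rcases hv' with h | h <;> simp_all

lemma pair_not_adj {n : ℕ} (G : SimpleGraph (Fin n)) (p q p' q' : Fin n)
    (h1 : ¬ (inLex G).Adj (inl p) (inr q')) (h2 : ¬ (inLex G).Adj (inl p') (inr q)) :
    ∀ u ∈ s((inl p : Fin n ⊕ Fin n), inr q), ∀ v ∈ s((inl p' : Fin n ⊕ Fin n), inr q'),
      ¬ (inLex G).Adj u v := by
  intro u hu v hv
  rw [Sym2.mem_iff] at hu hv
  rcases hu with rfl | rfl <;> rcases hv with rfl | rfl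
  · exact inLex_not_adj_ll G p p'
  · exact h1
  · exact fun h => h2 h.symm
  · exact inLex_not_adj_rr G q q'

lemma walk_step {n : ℕ} (G : SimpleGraph (Fin n)) (hG : HasIntervalProperty G)
    (k l : Fin n) (hkl : k < l) (hsucc : (l:ℕ) ≤ (k:ℕ)+1) :
    ∀ u v : Fin n, (w : G.Walk u v) → u ≤ k → l ≤ v → G.Adj k l := by
  intro u v w
  induction w with
  | nil => intro h1 h2; exact absurd (le_trans h2 h1) (not_le.mpr hkl)
  | @cons a b c h p ih =>
    intro h1 h2
    by_cases hb : b ≤ k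
    · exact ih hb h2
    · push_neg at hb
      have hab : a < b := lt_of_le_of_lt h1 hb
      have hlb : l ≤ b := by
        rw [Fin.le_def]; rw [Fin.lt_def] at hb; omega
      exact hG a b k l h hab h1 hkl hlb

lemma family_imf {n m : ℕ} (G : SimpleGraph (Fin n)) (X Y : Fin m → Fin n)
    (hY : Function.Injective Y)
    (hXY : ∀ u u', X u = X u' → u = u')
    (hedge : ∀ u, X u < Y u ∧ G.Adj (X u) (Y u))
    (hcross : ∀ u u', u ≠ u' → ¬ (inLex G).Adj (Sum.inl (X u)) (Sum.inr (Y u'))) :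
    IsInducedMatchingFamily (inLex G) (fun u => s(Sum.inl (X u), Sum.inr (Y u))) := by
  have hinj : Function.Injective (fun u => s((inl (X u) : Fin n ⊕ Fin n), inr (Y u))) := by
    intro u u' h
    simp only [pair_eq_iff] at h
    exact hY h.2
  refine ⟨hinj, ?_, ?_, ?_⟩
  · rintro e ⟨u, rfl⟩
    simp only [SimpleGraph.mem_edgeSet, inLex_adj]
    exact hedge u
  · rintro e ⟨u, rfl⟩ f ⟨u', rfl⟩ hne
    have huu' : u ≠ u' := by rintro rfl; exact hne rfl
    exact pair_disjoint _ _ _ _ (fun h => huu' (hXY _ _ h)) (fun h => huu' (hY h))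
  · rintro e ⟨u, rfl⟩ f ⟨u', rfl⟩ hne
    have huu' : u ≠ u' := by rintro rfl; exact hne rfl
    exact pair_not_adj G _ _ _ _ (hcross u u' huu') (hcross u' u huu'.symm)

end Helpers

open Sum

/-- If `G` is connected with the interval property and `{x_{i_1}, y_{j_1}}, …,
{x_{i_m}, y_{j_m}}` is an induced matching of `in_lex(G)` with `i_1 < ⋯ < i_m` satisfying
(∗) and `m = indmatch(in_lex(G))`, then `i_1, …, i_m, j_m` is an induced path of `G` of
length `m`. -/
theorem stmt_13 {n m : ℕ} (G : SimpleGraph (Fin n)) (hconn : G.Connected)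
    (hG : HasIntervalProperty G) (hm1 : 1 ≤ m)
    (i j : Fin m → Fin n) (hmono : StrictMono i)
    (hM : IsInducedMatchingFamily (inLex G)
      (fun t => s(Sum.inl (i t), Sum.inr (j t))))
    (hstar : CondStar G i j)
    (hm : IsGreatest {k : ℕ | ∃ M : Set (Sym2 (Fin n ⊕ Fin n)),
            IsInducedMatching (inLex G) M ∧ M.ncard = k} m) :
    IsInducedPath G m (Fin.snoc i (j ⟨m - 1, by omega⟩)) := by
  classical
  obtain ⟨finj, fsub, fdisj, findu⟩ := hM
  have hedge : ∀ t, i t < j t ∧ G.Adj (i t) (j t) := by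
    intro t
    have h := fsub (Set.mem_range_self t)
    rw [SimpleGraph.mem_edgeSet] at h
    exact (inLex_adj G _ _).1 h
  have hcross : ∀ s t : Fin m, s ≠ t → ¬ (inLex G).Adj (inl (i s)) (inr (j t)) := by
    intro s t hst hadj
    exact findu _ (Set.mem_range_self s) _ (Set.mem_range_self t)
      (fun h => hst (finj h)) (inl (i s)) (by simp) (inr (j t)) (by simp) hadj
  have hcrossG : ∀ s t : Fin m, s ≠ t → i s < j t → ¬ G.Adj (i s) (j t) :=
    fun s t hst hlt hadj => hcross s t hst ((inLex_adj G _ _).2 ⟨hlt, hadj⟩)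
  have jinj : Function.Injective j := by
    intro s t h
    by_contra hst
    exact fdisj _ (Set.mem_range_self s) _ (Set.mem_range_self t)
      (fun hh => hst (finj hh)) (inr (j t)) (by simp [h]) (by simp)
  have horder : ∀ s t : Fin m, s < t → j s ≤ i t := by
    intro s t hst
    by_contra h
    push_neg at h
    have hadj := hG (i s) (j s) (i t) (j s) (hedge s).2 (hedge s).1 (hmono hst).le h le_rfl
    exact hcrossG t s (ne_of_gt hst) h hadj
  have jsm : StrictMono j := fun s t hst => lt_of_le_of_lt (horder s t hst) (hedge t).1
  have hstep : ∀ (k : Fin n) (hk : (k:ℕ)+1 < n), G.Adj k ⟨(k:ℕ)+1, hk⟩ := by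
    intro k hk
    obtain ⟨w⟩ := hconn.preconnected k ⟨(k:ℕ)+1, hk⟩
    exact walk_step G hG k _ (by simp [Fin.lt_def]) (by simp) k _ w le_rfl le_rfl
  -- main lemma: consecutive i's are adjacent
  have hcons : ∀ (s : Fin m) (h1 : (s:ℕ)+1 < m), G.Adj (i s) (i ⟨(s:ℕ)+1, h1⟩) := by
    intro s h1
    set s' : Fin m := ⟨(s:ℕ)+1, h1⟩ with hs'def
    have hs'val : (s' : ℕ) = (s : ℕ) + 1 := rfl
    have hss' : s < s' := by rw [Fin.lt_def, hs'val]; omega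
    set N := Finset.univ.filter (fun l => G.Adj (i s) l) with hN
    have hNne : N.Nonempty := ⟨j s, by simp [hN, (hedge s).2]⟩
    set r := N.max' hNne with hr
    have hradj : G.Adj (i s) r := by
      have := N.max'_mem hNne
      simp only [hN, Finset.mem_filter] at this
      exact this.2
    have hrmax : ∀ l, G.Adj (i s) l → l ≤ r :=
      fun l hl => N.le_max' l (by simp [hN, hl])
    have hjsr : j s ≤ r := hrmax _ (hedge s).2
    have hisr : i s < r := lt_of_lt_of_le (hedge s).1 hjsr
    by_cases hcase : i s' ≤ r
    · exact hG (i s) r (i s) (i s') hradj hisr le_rfl (hmono hss') hcase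
    exfalso
    push_neg at hcase
    have hjbr : ∀ b : Fin m, b ≤ s → j b ≤ r := by
      intro b hb
      refine le_trans ?_ hjsr
      rcases eq_or_lt_of_le hb with heq | hlt
      · exact heq ▸ le_rfl
      · exact (jsm hlt).le
    have r_ne_i : ∀ b : Fin m, r ≠ i b := by
      intro b hb
      rcases lt_or_ge b s' with h | h
      · have hbs : b ≤ s := by
          rw [Fin.le_def]; rw [Fin.lt_def, hs'val] at h; omega
        have h2 : i b < r := lt_of_le_of_lt (hmono.monotone hbs) hisr
        exact ne_of_gt h2 hb
      · have h2 : r < i b := lt_of_lt_of_le hcase (hmono.monotone h)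
        exact ne_of_lt h2 hb
    have hrjb : ∀ b : Fin m, s' < b → ¬ G.Adj r (j b) := by
      intro b hb hadj
      have h1 : i s' < j b := lt_of_le_of_lt (hmono.monotone hb.le) (hedge b).1
      have h4 := hG r (j b) (i s') (j b) hadj (lt_trans hcase h1) hcase.le h1 le_rfl
      exact hcrossG s' b (ne_of_lt hb) h1 h4
    have hrjs' : ¬ G.Adj r (j s') := by
      intro hadj
      refine hstar s' r hcase hadj ?_
      have hfeq : (fun u => if u = s' then s((inl r : Fin n ⊕ Fin n), inr (j u))
          else s((inl (i u) : Fin n ⊕ Fin n), inr (j u)))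
          = fun u => s((inl (if u = s' then r else i u) : Fin n ⊕ Fin n), inr (j u)) := by
        funext u
        by_cases h : u = s' <;> simp [h]
      rw [hfeq]
      refine family_imf G _ j jinj ?_ ?_ ?_
      · intro u u' h
        by_cases h1 : u = s' <;> by_cases h2 : u' = s' <;>
          simp only [if_pos, if_neg, h1, h2, if_true, if_false] at h
        · rw [h1, h2]
        · exact absurd h (r_ne_i u')
        · exact absurd h.symm (r_ne_i u)
        · exact hmono.injective h
      · intro u
        by_cases h : u = s'
        · rw [if_pos h, h]
          exact ⟨lt_trans hcase (hedge s').1, hadj⟩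
        · rw [if_neg h]
          exact hedge u
      · intro u u' huu' hadjH
        rw [inLex_adj] at hadjH
        obtain ⟨hlt, hadj'⟩ := hadjH
        by_cases h1 : u = s'
        · rw [if_pos h1] at hlt hadj'
          have hne' : s' ≠ u' := h1 ▸ huu'
          rcases lt_or_ge s' u' with h | h
          · exact hrjb u' h hadj'
          · have h6 : u' < s' := lt_of_le_of_ne h (fun e => hne' e.symm)
            have hu's : u' ≤ s := by
              rw [Fin.le_def]; rw [Fin.lt_def, hs'val] at h6; omega
            exact absurd hlt (not_lt.mpr (hjbr u' hu's))
        · rw [if_neg h1] at hlt hadj'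
          exact hcrossG u u' huu' hlt hadj'
    -- build a bigger induced matching, contradiction with maximality
    have hr1lt : (r:ℕ)+1 < n := by
      have h5 := (i s').isLt
      rw [Fin.lt_def] at hcase
      omega
    set r1 : Fin n := ⟨(r:ℕ)+1, hr1lt⟩ with hr1def
    have hr1val : (r1 : ℕ) = (r:ℕ)+1 := rfl
    have hrr1 : G.Adj r r1 := hstep r hr1lt
    have hrr1lt : r < r1 := by rw [Fin.lt_def, hr1val]; omega
    have hr1i : (r1:ℕ) ≤ (i s' : ℕ) := by
      rw [hr1val]; rw [Fin.lt_def] at hcase; omega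
    have r1_ne_j : ∀ b : Fin m, r1 ≠ j b := by
      intro b hb
      rcases le_or_gt b s with h | h
      · have h5 := hjbr b h
        rw [← hb] at h5
        exact absurd h5 (not_le.mpr hrr1lt)
      · have hs'b : s' ≤ b := by rw [Fin.le_def, hs'val]; rw [Fin.lt_def] at h; omega
        have h5 : r1 < j b :=
          lt_of_le_of_lt (by rw [Fin.le_def]; exact hr1i)
            (lt_of_lt_of_le (hedge s').1 (jsm.monotone hs'b))
        exact ne_of_lt h5 hb
    have hA : ∀ b : Fin m, ¬ (inLex G).Adj (inl r) (inr (j b)) := by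
      intro b hadjH
      rw [inLex_adj] at hadjH
      obtain ⟨hlt, hadj⟩ := hadjH
      rcases le_or_gt b s with h | h
      · exact absurd hlt (not_lt.mpr (hjbr b h))
      · have hs'b : s' ≤ b := by rw [Fin.le_def, hs'val]; rw [Fin.lt_def] at h; omega
        rcases eq_or_lt_of_le hs'b with heq | h2
        · rw [← heq] at hadj; exact hrjs' hadj
        · exact hrjb b h2 hadj
    have hB : ∀ b : Fin m, ¬ (inLex G).Adj (inl (i b)) (inr r1) := by
      intro b hadjH
      rw [inLex_adj] at hadjH
      obtain ⟨hlt, hadj⟩ := hadjH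
      have hbs : b ≤ s := by
        by_contra hc
        push_neg at hc
        have hs'b : s' ≤ b := by rw [Fin.le_def, hs'val]; rw [Fin.lt_def] at hc; omega
        have h5 : i s' ≤ i b := hmono.monotone hs'b
        rw [Fin.lt_def, hr1val] at hlt
        rw [Fin.le_def] at h5
        rw [Fin.lt_def] at hcase
        omega
      rcases eq_or_lt_of_le hbs with heq | hlt2
      · rw [heq] at hadj
        exact absurd (hrmax r1 hadj) (not_le.mpr hrr1lt)
      · have h1 : i b < j s := lt_of_lt_of_le (hedge b).1 ((jsm hlt2).le)
        have h2 : j s ≤ r1 := le_trans hjsr hrr1lt.le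
        have h4 := hG (i b) r1 (i b) (j s) hadj hlt le_rfl h1 h2
        exact hcrossG b s (ne_of_lt hlt2) h1 h4
    have hnew_notmem : s((inl r : Fin n ⊕ Fin n), inr r1) ∉
        Set.range (fun t => s((inl (i t) : Fin n ⊕ Fin n), inr (j t))) := by
      rintro ⟨b, hb⟩
      rw [pair_eq_iff] at hb
      exact r_ne_i b hb.1.symm
    set M' : Set (Sym2 (Fin n ⊕ Fin n)) :=
      insert s((inl r : Fin n ⊕ Fin n), inr r1)
        (Set.range (fun t => s((inl (i t) : Fin n ⊕ Fin n), inr (j t)))) with hM'def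
    have hM'ind : IsInducedMatching (inLex G) M' := by
      refine ⟨?_, ?_, ?_⟩
      · intro e he
        rw [hM'def, Set.mem_insert_iff] at he
        rcases he with rfl | he
        · rw [SimpleGraph.mem_edgeSet, inLex_adj]
          exact ⟨hrr1lt, hrr1⟩
        · exact fsub he
      · intro e he f' hf' hne v hv
        rw [hM'def, Set.mem_insert_iff] at he hf'
        rcases he with rfl | ⟨u, rfl⟩ <;> rcases hf' with rfl | ⟨u', rfl⟩
        · exact absurd rfl hne
        · exact pair_disjoint r r1 (i u') (j u') (r_ne_i u') (r1_ne_j u') v hv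
        · exact pair_disjoint (i u) (j u) r r1 (fun h => r_ne_i u h.symm)
            (fun h => r1_ne_j u h.symm) v hv
        · exact fdisj _ ⟨u, rfl⟩ _ ⟨u', rfl⟩ hne v hv
      · intro e he f' hf' hne u hu v hv
        rw [hM'def, Set.mem_insert_iff] at he hf'
        rcases he with rfl | ⟨w, rfl⟩ <;> rcases hf' with rfl | ⟨w', rfl⟩
        · exact absurd rfl hne
        · exact pair_not_adj G r r1 (i w') (j w') (hA w') (hB w') u hu v hv
        · exact pair_not_adj G (i w) (j w) r r1 (hB w) (hA w) u hu v hv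
        · exact findu _ ⟨w, rfl⟩ _ ⟨w', rfl⟩ hne u hu v hv
    have hcard : M'.ncard = m + 1 := by
      rw [hM'def, Set.ncard_insert_of_notMem hnew_notmem (Set.finite_range _)]
      congr 1
      rw [← Set.image_univ, Set.ncard_image_of_injective _ finj, Set.ncard_univ]
      simp
    have hle := hm.2 (Set.mem_setOf.mpr ⟨M', hM'ind, hcard⟩)
    omega
  -- final assembly
  have hm1' : m - 1 < m := by omega
  show IsInducedPath G m (Fin.snoc i (j ⟨m - 1, hm1'⟩))
  have hp_lt : ∀ (k : ℕ) (hk : k < m) (hk' : k < m+1),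
      (Fin.snoc i (j ⟨m-1, hm1'⟩) : Fin (m+1) → Fin n) ⟨k, hk'⟩ = i ⟨k, hk⟩ := by
    intro k hk hk'
    have h : (⟨k, hk'⟩ : Fin (m+1)) = Fin.castSucc ⟨k, hk⟩ := by
      rw [Fin.ext_iff]; simp
    rw [h]
    exact @Fin.snoc_castSucc m (fun _ => Fin n) (j ⟨m-1, hm1'⟩) i ⟨k, hk⟩
  have hp_last : ∀ (hk' : m < m+1),
      (Fin.snoc i (j ⟨m-1, hm1'⟩) : Fin (m+1) → Fin n) ⟨m, hk'⟩ = j ⟨m-1, hm1'⟩ := by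
    intro hk'
    have h : (⟨m, hk'⟩ : Fin (m+1)) = Fin.last m := by
      rw [Fin.ext_iff]; simp [Fin.last]
    rw [h]
    exact @Fin.snoc_last m (fun _ => Fin n) (j ⟨m-1, hm1'⟩) i
  have hpmono : ∀ a b : Fin (m+1), a < b →
      (Fin.snoc i (j ⟨m-1, hm1'⟩) : Fin (m+1) → Fin n) a <
        (Fin.snoc i (j ⟨m-1, hm1'⟩) : Fin (m+1) → Fin n) b := by
    rintro ⟨ka, hka⟩ ⟨kb, hkb⟩ hab
    rw [Fin.mk_lt_mk] at hab
    by_cases hb : kb < m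
    · rw [hp_lt ka (by omega) hka, hp_lt kb hb hkb]
      exact hmono (by rw [Fin.mk_lt_mk]; exact hab)
    · have hkbm : kb = m := by omega
      rw [show (⟨kb, hkb⟩ : Fin (m+1)) = ⟨m, by omega⟩ from by simp [Fin.ext_iff, hkbm]]
      rw [hp_last (by omega), hp_lt ka (by omega) hka]
      have h1 : (⟨ka, by omega⟩ : Fin m) ≤ ⟨m-1, hm1'⟩ := by rw [Fin.mk_le_mk]; omega
      exact lt_of_le_of_lt (hmono.monotone h1) (hedge _).1
  have hpinj : Function.Injective (Fin.snoc i (j ⟨m-1, hm1'⟩) : Fin (m+1) → Fin n) := by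
    intro a b hab
    rcases lt_trichotomy a b with h | h | h
    · exact absurd hab (ne_of_lt (hpmono a b h))
    · exact h
    · exact absurd hab.symm (ne_of_lt (hpmono b a h))
  have hfwd : ∀ (ka kb : ℕ) (hka : ka < m+1) (hkb : kb < m+1), ka < kb →
      G.Adj ((Fin.snoc i (j ⟨m-1, hm1'⟩) : Fin (m+1) → Fin n) ⟨ka, hka⟩)
        ((Fin.snoc i (j ⟨m-1, hm1'⟩) : Fin (m+1) → Fin n) ⟨kb, hkb⟩) →
      ka + 1 = kb := by
    intro ka kb hka hkb hab hadj
    by_contra hne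
    have h2 : ka + 2 ≤ kb := by omega
    by_cases hb : kb < m
    · rw [hp_lt ka (by omega) hka, hp_lt kb hb hkb] at hadj
      have hc : kb - 1 < m := by omega
      have hAm : ka < m := by omega
      have h1 : i ⟨ka, hAm⟩ < j ⟨kb-1, hc⟩ :=
        lt_of_lt_of_le (hedge ⟨ka, hAm⟩).1 (jsm.monotone (by rw [Fin.mk_le_mk]; omega))
      have h3 : j ⟨kb-1, hc⟩ ≤ i ⟨kb, hb⟩ := horder _ _ (by rw [Fin.mk_lt_mk]; omega)
      have hadj2 := hG _ _ _ _ hadj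
        (hmono (show (⟨ka, hAm⟩ : Fin m) < ⟨kb, hb⟩ by rw [Fin.mk_lt_mk]; omega))
        le_rfl h1 h3
      exact hcrossG ⟨ka, hAm⟩ ⟨kb-1, hc⟩ (by simp [Fin.ext_iff]; omega) h1 hadj2
    · have hkbm : kb = m := by omega
      rw [show (⟨kb, hkb⟩ : Fin (m+1)) = ⟨m, by omega⟩ from by simp [Fin.ext_iff, hkbm]] at hadj
      rw [hp_lt ka (by omega) hka, hp_last (by omega)] at hadj
      have hAm : ka < m := by omega
      have h1 : i ⟨ka, hAm⟩ < j ⟨m-1, hm1'⟩ :=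
        lt_of_lt_of_le (hedge ⟨ka, hAm⟩).1 (jsm.monotone (by rw [Fin.mk_le_mk]; omega))
      exact hcrossG ⟨ka, hAm⟩ ⟨m-1, hm1'⟩ (by simp [Fin.ext_iff]; omega) h1 hadj
  have hbwd : ∀ (ka kb : ℕ) (hka : ka < m+1) (hkb : kb < m+1), ka + 1 = kb →
      G.Adj ((Fin.snoc i (j ⟨m-1, hm1'⟩) : Fin (m+1) → Fin n) ⟨ka, hka⟩)
        ((Fin.snoc i (j ⟨m-1, hm1'⟩) : Fin (m+1) → Fin n) ⟨kb, hkb⟩) := by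
    intro ka kb hka hkb h
    subst h
    by_cases hb : ka + 1 < m
    · rw [hp_lt ka (by omega) hka, hp_lt (ka+1) hb hkb]
      exact hcons ⟨ka, by omega⟩ hb
    · have hkam : ka + 1 = m := by omega
      rw [hp_lt ka (by omega) hka]
      rw [show (⟨ka+1, hkb⟩ : Fin (m+1)) = ⟨m, by omega⟩ from by simp [Fin.ext_iff]; omega]
      rw [hp_last (by omega)]
      rw [show (⟨ka, by omega⟩ : Fin m) = ⟨m-1, hm1'⟩ from by simp [Fin.ext_iff]; omega]
      exact (hedge _).2
  refine ⟨hpinj, ?_⟩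
  rintro ⟨ka, hka⟩ ⟨kb, hkb⟩
  show G.Adj _ _ ↔ (ka + 1 = kb ∨ kb + 1 = ka)
  constructor
  · intro hadj
    rcases Nat.lt_trichotomy ka kb with h | h | h
    · exact Or.inl (hfwd ka kb hka hkb h hadj)
    · exfalso
      have heq : (⟨ka, hka⟩ : Fin (m+1)) = ⟨kb, hkb⟩ := by simp [Fin.ext_iff, h]
      rw [heq] at hadj
      exact G.loopless.irrefl _ hadj
    · exact Or.inr (hfwd kb ka hkb hka h hadj.symm)
  · rintro (h | h)
    · exact hbwd ka kb hka hkb h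
    · exact (hbwd kb ka hkb hka h).symm
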